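/- arXiv:2503.00892 — 4 statements merged into one kernel-verified Lean document; each statement's English description precedes it below -/
import Mathlib

section
/- Let n ≥ 1, let F : EuclideanSpace ℝ (Fin n) → ℝ be continuously differentiable, let x, x' ∈ EuclideanSpace ℝ (Fin n), and let (u_1, …, u_n) be an orthonormal basis of EuclideanSpace ℝ (Fin n). Then Integrated Gradients satisfies the completeness axiom with error term ε(F) = −F(x'): ∑_{i=1}^n IG_{u_i}(x, x', F) = F(x) − F(x'). (Axiom C for IG.) -/
open RealInnerProductSpace intervalIntegral

theorem contGrad {n : ℕ} {F : EuclideanSpace ℝ (Fin n) → ℝ} (hF : ContDiff ℝ 1 F) :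
    Continuous (gradient F) := by
  have h : Continuous (fun p => fderiv ℝ F p) := (hF.fderiv_right (m := 0) (by norm_num)).continuous
  have : gradient F = fun p => (InnerProductSpace.toDual ℝ _).symm (fderiv ℝ F p) := rfl
  rw [this]
  exact (InnerProductSpace.toDual ℝ _).symm.continuous.comp h

/-- **Axiom C (completeness) for Integrated Gradients.**
With `IG_u(x, x', F) = ⟪x - x', u⟫ * ∫_0^1 ⟪∇F(x' + t • (x - x')), u⟫ dt`,
summing the attributions over an orthonormal basis `(u i)` gives
`F x - F x'`, i.e. completeness holds with error term `ε(F) = -F x'`. -/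
theorem ig_completeness (n : ℕ) (hn : 1 ≤ n)
    (F : EuclideanSpace ℝ (Fin n) → ℝ) (hF : ContDiff ℝ 1 F)
    (x x' : EuclideanSpace ℝ (Fin n))
    (u : OrthonormalBasis (Fin n) ℝ (EuclideanSpace ℝ (Fin n))) :
    ∑ i : Fin n,
        ⟪x - x', u i⟫ * ∫ t in (0:ℝ)..1, ⟪gradient F (x' + t • (x - x')), u i⟫ =
      F x - F x' := by
  set v := x - x' with hv
  set γ : ℝ → EuclideanSpace ℝ (Fin n) := fun t => x' + t • v with hγ
  have hγc : Continuous γ := by continuity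
  have hgc : Continuous fun t => gradient F (γ t) := (contGrad hF).comp hγc
  have hint : ∀ i : Fin n, IntervalIntegrable (fun t => ⟪gradient F (γ t), u i⟫)
      MeasureTheory.volume 0 1 := fun i =>
    (Continuous.inner hgc continuous_const).intervalIntegrable 0 1
  have step1 : ∑ i : Fin n, ⟪v, u i⟫ * ∫ t in (0:ℝ)..1, ⟪gradient F (γ t), u i⟫
      = ∫ t in (0:ℝ)..1, ⟪gradient F (γ t), v⟫ := by
    have : ∀ i : Fin n, ⟪v, u i⟫ * ∫ t in (0:ℝ)..1, ⟪gradient F (γ t), u i⟫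
        = ∫ t in (0:ℝ)..1, ⟪v, u i⟫ * ⟪gradient F (γ t), u i⟫ := fun i =>
      (intervalIntegral.integral_const_mul _ _).symm
    simp_rw [this]
    rw [← intervalIntegral.integral_finset_sum]
    · congr 1
      ext t
      rw [← u.sum_inner_mul_inner (gradient F (γ t)) v]
      exact Finset.sum_congr rfl fun i _ => by rw [real_inner_comm v, mul_comm]
    · exact fun i _ => (hint i).const_mul _
  rw [step1]
  have hderiv : ∀ t ∈ Set.uIcc (0:ℝ) 1,
      HasDerivAt (fun s => F (γ s)) ⟪gradient F (γ t), v⟫ t := by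
    intro t _
    have h1 : HasDerivAt γ v t := by
      have : HasDerivAt (fun s : ℝ => s • v) ((1:ℝ) • v) t :=
        (hasDerivAt_id t).smul_const v
      have h := this.const_add x'
      rw [one_smul] at h
      exact h
    have h2 : HasFDerivAt F (fderiv ℝ F (γ t)) (γ t) :=
      (hF.differentiable one_ne_zero (γ t)).hasFDerivAt
    have h3 := h2.comp_hasDerivAt t h1
    have h4 : fderiv ℝ F (γ t) v = ⟪gradient F (γ t), v⟫ := by
      have := (hF.differentiable one_ne_zero (γ t)).hasGradientAt.hasFDerivAt
      rw [h2.unique this]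
      simp [InnerProductSpace.toDual]
    rwa [h4] at h3
  have := intervalIntegral.integral_eq_sub_of_hasDerivAt hderiv
    ((Continuous.inner hgc continuous_const).intervalIntegrable 0 1)
  rw [this]
  simp only [hγ]
  rw [one_smul, zero_smul, add_zero, hv, add_sub_cancel]
end

section
/- Let n ≥ 1, let F : EuclideanSpace ℝ (Fin n) → ℝ be continuously differentiable, let γ : [0,1] → EuclideanSpace ℝ (Fin n) be a continuously differentiable curve with γ(0) = p and γ(1) = o, and let s : EuclideanSpace ℝ (Fin n) ≃ᵢ EuclideanSpace ℝ (Fin n) be a surjective isometry whose linear part (derivative) is the linear isometry L, i.e. s(x) = L(x) + c for some constant c. Then for all u, v ∈ EuclideanSpace ℝ (Fin n): α_{F∘s⁻¹, s∘γ}(s(p))(L u, L v) = α_{F,γ}(p)(u, v), i.e. −∫_0^1 ⟨∇(F∘s⁻¹)((s∘γ)(t)), L u⟩ · ⟨L v, (s∘γ)'(t)⟩ dt = −∫_0^1 ⟨∇F(γ(t)), u⟩ · ⟨v, γ'(t)⟩ dt. (Proposition 1, isometry invariance of the path attribution form, in the Euclidean case.) -/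
open RealInnerProductSpace intervalIntegral

/-- **Proposition 1 (isometry invariance of the path attribution form,
Euclidean case).**  Let `s` be a surjective isometry of Euclidean space, which
is affine: `s x = L x + c` with linear part the linear isometry `L`.  Then
the path attribution form is invariant:
`α_{F ∘ s⁻¹, s ∘ γ}(s p)(L u, L v) = α_{F, γ}(p)(u, v)`. -/
theorem path_attribution_isometry_invariance (n : ℕ) (hn : 1 ≤ n)
    (F : EuclideanSpace ℝ (Fin n) → ℝ) (hF : ContDiff ℝ 1 F)
    (γ : ℝ → EuclideanSpace ℝ (Fin n)) (hγ : ContDiff ℝ 1 γ)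
    (p o : EuclideanSpace ℝ (Fin n)) (h0 : γ 0 = p) (h1 : γ 1 = o)
    (s : EuclideanSpace ℝ (Fin n) ≃ᵢ EuclideanSpace ℝ (Fin n))
    (L : EuclideanSpace ℝ (Fin n) ≃ₗᵢ[ℝ] EuclideanSpace ℝ (Fin n))
    (c : EuclideanSpace ℝ (Fin n)) (hs : ∀ x, s x = L x + c)
    (u v : EuclideanSpace ℝ (Fin n)) :
    -(∫ t in (0:ℝ)..1,
        ⟪gradient (F ∘ s.symm) (s (γ t)), L u⟫ * ⟪L v, deriv (fun t => s (γ t)) t⟫) =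
      -(∫ t in (0:ℝ)..1, ⟪gradient F (γ t), u⟫ * ⟪v, deriv γ t⟫) := by
  have hLsymm : ∀ y, s.symm y = L.symm (y - c) := by
    intro y
    apply s.injective
    rw [s.apply_symm_apply, hs]
    simp
  congr 1
  apply intervalIntegral.integral_congr
  intro t _
  have hγd : HasDerivAt γ (deriv γ t) t := ((hγ.differentiable one_ne_zero) t).hasDerivAt
  have hsd : HasDerivAt (fun t => s (γ t)) (L (deriv γ t)) t := by
    simp only [hs]
    exact (L.toContinuousLinearEquiv.hasFDerivAt.comp_hasDerivAt t hγd).add_const c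
  have hFd : HasFDerivAt F (fderiv ℝ F (γ t)) (γ t) :=
    ((hF.differentiable one_ne_zero) (γ t)).hasFDerivAt
  have hA : HasFDerivAt (fun y => s.symm y)
      (L.symm.toContinuousLinearEquiv : EuclideanSpace ℝ (Fin n) →L[ℝ] EuclideanSpace ℝ (Fin n))
      (s (γ t)) := by
    simp only [hLsymm]
    exact L.symm.toContinuousLinearEquiv.toContinuousLinearMap.hasFDerivAt.comp _
      ((hasFDerivAt_id _).sub_const c)
  have hcomp : HasFDerivAt (F ∘ s.symm)
      ((fderiv ℝ F (γ t)).comp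
        (L.symm.toContinuousLinearEquiv : EuclideanSpace ℝ (Fin n) →L[ℝ] EuclideanSpace ℝ (Fin n)))
      (s (γ t)) := by
    have h : s.symm (s (γ t)) = γ t := s.symm_apply_apply _
    have hFd' : HasFDerivAt F (fderiv ℝ F (γ t)) (s.symm (s (γ t))) := by
      rw [h]; exact hFd
    exact HasFDerivAt.comp _ hFd' hA
  have h1 : ⟪gradient (F ∘ s.symm) (s (γ t)), L u⟫ = ⟪gradient F (γ t), u⟫ := by
    rw [gradient, gradient, InnerProductSpace.toDual_symm_apply,
      InnerProductSpace.toDual_symm_apply, hcomp.fderiv]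
    simp
  simp only [hsd.deriv, h1, L.inner_map_map]
end

section
/- Let n ≥ 1, let F : EuclideanSpace ℝ (Fin n) → ℝ be continuously differentiable, let (u_1, …, u_n) be an orthonormal basis of EuclideanSpace ℝ (Fin n), fix indices i ≠ j, and let s : EuclideanSpace ℝ (Fin n) → EuclideanSpace ℝ (Fin n) be the linear isometry with s(u_i) = u_j, s(u_j) = u_i and s(u_k) = u_k for k ≠ i, j. If F(s(x)) = F(x) for all x, then for all x, x' ∈ EuclideanSpace ℝ (Fin n): IG_{u_i}(x, x', F) = IG_{u_j}(s(x), s(x'), F). (Axiom SI, symmetry invariance, for Integrated Gradients.) -/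
open RealInnerProductSpace intervalIntegral

/-- **Axiom SI (symmetry invariance) for Integrated Gradients.**
Let `(u k)` be an orthonormal basis, `i ≠ j`, and let `s` be the linear
isometry swapping `u i` and `u j` and fixing the other basis vectors.  If
`F (s x) = F x` for all `x`, then
`IG_{u i}(x, x', F) = IG_{u j}(s x, s x', F)`. -/
theorem ig_symmetry_invariance (n : ℕ) (hn : 1 ≤ n)
    (F : EuclideanSpace ℝ (Fin n) → ℝ) (hF : ContDiff ℝ 1 F)
    (u : OrthonormalBasis (Fin n) ℝ (EuclideanSpace ℝ (Fin n)))
    (i j : Fin n) (hij : i ≠ j)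
    (s : EuclideanSpace ℝ (Fin n) ≃ₗᵢ[ℝ] EuclideanSpace ℝ (Fin n))
    (hsi : s (u i) = u j) (hsj : s (u j) = u i)
    (hsk : ∀ k : Fin n, k ≠ i → k ≠ j → s (u k) = u k)
    (hFs : ∀ x, F (s x) = F x)
    (x x' : EuclideanSpace ℝ (Fin n)) :
    ⟪x - x', u i⟫ * ∫ t in (0:ℝ)..1, ⟪gradient F (x' + t • (x - x')), u i⟫ =
      ⟪s x - s x', u j⟫ *
        ∫ t in (0:ℝ)..1, ⟪gradient F (s x' + t • (s x - s x')), u j⟫ := by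
  have hdiff : Differentiable ℝ F := hF.differentiable one_ne_zero
  -- chain rule: fderiv F y v = fderiv F (s y) (s v)
  have hchain : ∀ y v, fderiv ℝ F y v = fderiv ℝ F (s y) (s v) := by
    intro y v
    have hcomp : HasFDerivAt (F ∘ s)
        ((fderiv ℝ F (s y)).comp (s : EuclideanSpace ℝ (Fin n) →L[ℝ] EuclideanSpace ℝ (Fin n))) y :=
      (hdiff (s y)).hasFDerivAt.comp y
        (s.toContinuousLinearEquiv.hasFDerivAt)
    have hFse : (F ∘ s) = F := funext hFs
    rw [hFse] at hcomp
    rw [hcomp.fderiv]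
    rfl
  have hgrad : ∀ y v, ⟪gradient F y, v⟫ = fderiv ℝ F y v := by
    intro y v
    simp [gradient, InnerProductSpace.toDual_symm_apply]
  have hkey : ∀ z, ⟪gradient F z, u i⟫ = ⟪gradient F (s z), u j⟫ := by
    intro z
    rw [hgrad, hgrad, hchain z (u i), hsi]
  have hfac : ⟪s x - s x', u j⟫ = ⟪x - x', u i⟫ := by
    rw [← hsi, ← map_sub, s.inner_map_map]
  rw [hfac]
  congr 1
  apply intervalIntegral.integral_congr
  intro t _
  have hpath : s x' + t • (s x - s x') = s (x' + t • (x - x')) := by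
    rw [map_add, map_smul, map_sub]
  show ⟪gradient F (x' + t • (x - x')), u i⟫ = ⟪gradient F (s x' + t • (s x - s x')), u j⟫
  rw [hpath, ← hkey]
end

section
/- Let n ≥ 1, let F : EuclideanSpace ℝ (Fin n) → ℝ be continuously differentiable, let γ : [0,1] → EuclideanSpace ℝ (Fin n) be a continuously differentiable curve with γ(0) = p and γ(1) = o, and suppose Q : EuclideanSpace ℝ (Fin n) →ₗ[ℝ] EuclideanSpace ℝ (Fin n) is a symmetric linear endomorphism satisfying ⟨Q u, v⟩ = (1/2)·(α_{F,γ}(p)(u,v) + α_{F,γ}(p)(v,u)) for all u, v. Then the trace of Q equals F(p) − F(o). (Trace form of Proposition 2: the trace of the endomorphism associated to the symmetrised path attribution form recovers the completeness error term.) -/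
open RealInnerProductSpace intervalIntegral

/-- **Trace form of Proposition 2.**  If `Q` is the symmetric endomorphism
associated (via the metric) to the symmetrised path attribution form, i.e.
`⟪Q u, v⟫ = (1/2) * (α_{F,γ}(p)(u, v) + α_{F,γ}(p)(v, u))` with
`α_{F,γ}(p)(u, v) = -∫_0^1 ⟪∇F(γ t), u⟫ * ⟪v, γ' t⟫ dt`, then
`tr Q = F p - F o`. -/
theorem trace_path_attribution (n : ℕ) (hn : 1 ≤ n)
    (F : EuclideanSpace ℝ (Fin n) → ℝ) (hF : ContDiff ℝ 1 F)
    (γ : ℝ → EuclideanSpace ℝ (Fin n)) (hγ : ContDiff ℝ 1 γ)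
    (p o : EuclideanSpace ℝ (Fin n)) (h0 : γ 0 = p) (h1 : γ 1 = o)
    (Q : EuclideanSpace ℝ (Fin n) →ₗ[ℝ] EuclideanSpace ℝ (Fin n))
    (hsym : ∀ u v : EuclideanSpace ℝ (Fin n), ⟪Q u, v⟫ = ⟪u, Q v⟫)
    (hQ : ∀ u v : EuclideanSpace ℝ (Fin n),
      ⟪Q u, v⟫ = (1 / 2) *
        ((-(∫ t in (0:ℝ)..1, ⟪gradient F (γ t), u⟫ * ⟪v, deriv γ t⟫)) +
          (-(∫ t in (0:ℝ)..1, ⟪gradient F (γ t), v⟫ * ⟪u, deriv γ t⟫)))) :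
    LinearMap.trace ℝ (EuclideanSpace ℝ (Fin n)) Q = F p - F o := by
  classical
  set b : OrthonormalBasis (Fin n) ℝ (EuclideanSpace ℝ (Fin n)) :=
    EuclideanSpace.basisFun (Fin n) ℝ
  -- continuity facts
  have hFd : Differentiable ℝ F := hF.differentiable one_ne_zero
  have hγd : Differentiable ℝ γ := hγ.differentiable one_ne_zero
  have hgradcont : Continuous (fun x => gradient F x) := by
    have h1 : Continuous (fderiv ℝ F) := hF.continuous_fderiv one_ne_zero
    have : (fun x => gradient F x) =
        fun x => (InnerProductSpace.toDual ℝ (EuclideanSpace ℝ (Fin n))).symm (fderiv ℝ F x) :=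
      rfl
    rw [this]
    exact (InnerProductSpace.toDual ℝ _).symm.continuous.comp h1
  have hderivcont : Continuous (deriv γ) := hγ.continuous_deriv le_rfl
  have hcont : ∀ u v : EuclideanSpace ℝ (Fin n),
      Continuous (fun t => ⟪gradient F (γ t), u⟫ * ⟪v, deriv γ t⟫) := fun u v =>
    ((hgradcont.comp hγ.continuous).inner continuous_const).mul
      (continuous_const.inner hderivcont)
  -- diagonal entries
  have hdiag : ∀ u : EuclideanSpace ℝ (Fin n),
      ⟪Q u, u⟫ = -(∫ t in (0:ℝ)..1, ⟪gradient F (γ t), u⟫ * ⟪u, deriv γ t⟫) := by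
    intro u; rw [hQ u u]; ring
  -- trace as sum of diagonal inner products
  have htr : LinearMap.trace ℝ (EuclideanSpace ℝ (Fin n)) Q = ∑ i, ⟪Q (b i), b i⟫ := by
    rw [LinearMap.trace_eq_matrix_trace ℝ b.toBasis Q, Matrix.trace]
    congr 1
    ext i
    rw [Matrix.diag_apply, LinearMap.toMatrix_apply, b.coe_toBasis,
      b.coe_toBasis_repr_apply, b.repr_apply_apply, real_inner_comm]
  rw [htr]
  have hsum : ∑ i, ⟪Q (b i), b i⟫
      = -(∫ t in (0:ℝ)..1, ∑ i, ⟪gradient F (γ t), b i⟫ * ⟪b i, deriv γ t⟫) := by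
    rw [intervalIntegral.integral_finset_sum (fun i _ => (hcont (b i) (b i)).intervalIntegrable 0 1),
      ← Finset.sum_neg_distrib]
    exact Finset.sum_congr rfl fun i _ => hdiag (b i)
  rw [hsum]
  have hpar : ∀ t : ℝ, ∑ i, ⟪gradient F (γ t), b i⟫ * ⟪b i, deriv γ t⟫
      = ⟪gradient F (γ t), deriv γ t⟫ := fun t =>
    b.sum_inner_mul_inner _ _
  rw [intervalIntegral.integral_congr (fun t _ => hpar t)]
  -- FTC
  have hFTC : (∫ t in (0:ℝ)..1, ⟪gradient F (γ t), deriv γ t⟫) = F (γ 1) - F (γ 0) := by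
    apply intervalIntegral.integral_eq_sub_of_hasDerivAt (f := fun t => F (γ t))
    · intro t _
      have hg : HasGradientAt F (gradient F (γ t)) (γ t) := (hFd (γ t)).hasGradientAt
      have hγ' : HasDerivAt γ (deriv γ t) t := (hγd t).hasDerivAt
      have := hg.hasFDerivAt.comp_hasDerivAt t hγ'
      simpa [InnerProductSpace.toDual_apply_apply, real_inner_comm, Function.comp_def] using this
    · exact ((hgradcont.comp hγ.continuous).inner hderivcont).intervalIntegrable 0 1
  rw [hFTC, h0, h1]
  ring
end
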